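/- Let j be odd, and let x, m, p ⊆ ⟦n⟧_{j+1} and x̄, x̂, m̄, m̂, p̄, p̂ ⊆ ⟦n⟧_{j+2}. Then the movement condition (x̄⊖ ∪ x⊙ ∪ x̂⊕) : (m̄⊖ ∪ m⊙ ∪ m̂⊕) ⇝ (p̄⊖ ∪ p⊙ ∪ p̂⊕) holds if and only if the following six conditions hold: p = (m ∪ x⁺)\x⁻; m = (p ∪ x⁻)\x⁺; p̄ = (m̄ ∪ x̄⁺)\(x̄⁻ ∪ x); m̄ = (p̄ ∪ x̄⁻ ∪ x)\x̄⁺; p̂ = (m̂ ∪ x̂⁺ ∪ x)\x̂⁻; m̂ = (p̂ ∪ x̂⁻)\(x̂⁺ ∪ x). -/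

import Mathlib

/-- The three symbols `⊖`, `⊙`, `⊕`. -/
inductive CSym : Type
  | minus : CSym
  | mid : CSym
  | plus : CSym
deriving DecidableEq

/-- `Str n j` is `⟦n⟧_j`: strings of length `n` over `{⊖,⊙,⊕}` with exactly `j`
occurrences of `⊙`. -/
def Str (n j : ℕ) : Type := {l : List CSym // l.length = n ∧ l.count CSym.mid = j}

/-- The even faces `a⁺` of `a ∈ ⟦n⟧_{j+1}`: replace the `i`-th occurrence of `⊙`
by `⊕` if `i` is odd (i.e. the number of earlier `⊙`'s is even), and by `⊖` if
`i` is even. -/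
def posF {n j : ℕ} (a : Str n (j+1)) : Set (Str n j) :=
  {b | ∃ (q : ℕ) (h : q < a.1.length), a.1.get ⟨q, h⟩ = CSym.mid ∧
    b.1 = a.1.set q (if Even ((a.1.take q).count CSym.mid) then CSym.plus else CSym.minus)}

/-- The odd faces `a⁻` of `a ∈ ⟦n⟧_{j+1}`: replace the `i`-th occurrence of `⊙`
by `⊖` if `i` is odd, and by `⊕` if `i` is even. -/
def negF {n j : ℕ} (a : Str n (j+1)) : Set (Str n j) :=
  {b | ∃ (q : ℕ) (h : q < a.1.length), a.1.get ⟨q, h⟩ = CSym.mid ∧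
    b.1 = a.1.set q (if Even ((a.1.take q).count CSym.mid) then CSym.minus else CSym.plus)}

def sPos {n j : ℕ} (ξ : Set (Str n (j+1))) : Set (Str n j) := ⋃ a ∈ ξ, posF a
def sNeg {n j : ℕ} (ξ : Set (Str n (j+1))) : Set (Str n j) := ⋃ a ∈ ξ, negF a

/-- Append `⊖` to a string. -/
def appM {n j : ℕ} (a : Str n j) : Str (n+1) j :=
  ⟨a.1 ++ [CSym.minus], by
    refine ⟨by simp [a.2.1], ?_⟩
    simp [List.count_append, a.2.2, List.count_singleton]⟩

/-- Append `⊕` to a string. -/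
def appP {n j : ℕ} (a : Str n j) : Str (n+1) j :=
  ⟨a.1 ++ [CSym.plus], by
    refine ⟨by simp [a.2.1], ?_⟩
    simp [List.count_append, a.2.2, List.count_singleton]⟩

/-- Append `⊙` to a string. -/
def appO {n j : ℕ} (a : Str n j) : Str (n+1) (j+1) :=
  ⟨a.1 ++ [CSym.mid], by
    refine ⟨by simp [a.2.1], ?_⟩
    simp [List.count_append, a.2.2, List.count_singleton]⟩

/-- A subset of `⟦n⟧_{j+1}` is well-formed if distinct elements share no even
face and no odd face. -/
def WfC {n j : ℕ} (ξ : Set (Str n (j+1))) : Prop :=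
  ∀ a ∈ ξ, ∀ b ∈ ξ, a ≠ b → posF a ∩ posF b = ∅ ∧ negF a ∩ negF b = ∅

-- ================= aux =================
open Set Function

def genF (s t : CSym) {n j : ℕ} (a : Str n (j+1)) : Set (Str n j) :=
  {b | ∃ (q : ℕ) (h : q < a.1.length), a.1.get ⟨q, h⟩ = CSym.mid ∧
    b.1 = a.1.set q (if Even ((a.1.take q).count CSym.mid) then s else t)}

lemma posF_eq {n j : ℕ} (a : Str n (j+1)) : posF a = genF CSym.plus CSym.minus a := rfl
lemma negF_eq {n j : ℕ} (a : Str n (j+1)) : negF a = genF CSym.minus CSym.plus a := rfl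

lemma genF_app (s t e : CSym) (he : e ≠ CSym.mid) {n j : ℕ}
    (a : Str n (j+1)) (a' : Str (n+1) (j+1)) (ha : a'.1 = a.1 ++ [e])
    (F : Str n j → Str (n+1) j) (hF : ∀ b : Str n j, (F b).1 = b.1 ++ [e]) :
    genF s t a' = F '' genF s t a := by
  obtain ⟨l', hl'⟩ := a'
  simp only at ha
  subst ha
  have hlen : a.1.length = n := a.2.1
  ext b
  constructor
  · rintro ⟨q, hq, hmid, hset⟩
    simp only [List.get_eq_getElem] at hmid
    have hq' : q < n + 1 := by simpa [hlen] using hq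
    rcases Nat.lt_or_ge q n with hqn | hqn
    · have hget : a.1[q]'(by omega) = CSym.mid := by
        rwa [List.getElem_append_left (by omega)] at hmid
      have htake : (a.1 ++ [e]).take q = a.1.take q :=
        List.take_append_of_le_length (by omega)
      rw [htake, List.set_append] at hset
      simp only [hlen, hqn, if_pos] at hset
      set c := if Even ((a.1.take q).count CSym.mid) then s else t with hc
      have hcnt : (a.1.set q c).count CSym.mid = j := by
        have := b.2.2
        rw [hset] at this
        simpa [List.count_append, List.count_singleton, he] using this
      refine ⟨⟨a.1.set q c, by simp [hlen], hcnt⟩, ⟨q, by omega, ?_, rfl⟩, ?_⟩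
      · simpa using hget
      · apply Subtype.ext
        refine (hF _).trans ?_
        exact hset.symm
    · have heq : q = n := by omega
      subst heq
      rw [List.getElem_append_right (by omega)] at hmid
      simp [hlen] at hmid
      exact absurd hmid he
  · rintro ⟨b', ⟨q, hq, hmid, hset⟩, rfl⟩
    simp only [List.get_eq_getElem] at hmid
    have hqn : q < n := by rwa [hlen] at hq
    refine ⟨q, by simp [hlen]; omega, ?_, ?_⟩
    · simp only [List.get_eq_getElem]
      rwa [List.getElem_append_left (by omega)]
    · have htake : (a.1 ++ [e]).take q = a.1.take q :=
        List.take_append_of_le_length (by omega)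
      show (F b').1 = _
      rw [hF, hset, htake, List.set_append]
      simp [hlen, hqn]

lemma genF_appO (s t : CSym) (hs : s ≠ CSym.mid) {n j : ℕ}
    (a : Str n (j+1)) (heven : Even (a.1.count CSym.mid))
    (c : Str (n+1) (j+1)) (hc : c.1 = a.1 ++ [s]) :
    genF s t (appO a) = appO '' genF s t a ∪ {c} := by
  have hlen : a.1.length = n := a.2.1
  have hval : (appO a).1 = a.1 ++ [CSym.mid] := rfl
  ext b
  constructor
  · rintro ⟨q, hq, hmid, hset⟩
    simp only [List.get_eq_getElem, hval] at hmid hset hq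
    have hq' : q < n + 1 := by simpa [hlen] using hq
    rcases Nat.lt_or_ge q n with hqn | hqn
    · have hget : a.1[q]'(by omega) = CSym.mid := by
        rwa [List.getElem_append_left (by omega)] at hmid
      have htake : (a.1 ++ [CSym.mid]).take q = a.1.take q :=
        List.take_append_of_le_length (by omega)
      rw [htake, List.set_append] at hset
      simp only [hlen, hqn, if_pos] at hset
      set cv := if Even ((a.1.take q).count CSym.mid) then s else t with hcv
      have hcnt : (a.1.set q cv).count CSym.mid = j := by
        have := b.2.2
        rw [hset] at this
        simpa [List.count_append] using this
      left
      refine ⟨⟨a.1.set q cv, by simp [hlen], hcnt⟩, ⟨q, by omega, ?_, rfl⟩, ?_⟩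
      · simpa using hget
      · apply Subtype.ext
        show _ ++ [CSym.mid] = _
        exact hset.symm
    · have heq : q = n := by omega
      have htake : (a.1 ++ [CSym.mid]).take q = a.1 := by
        rw [List.take_append_of_le_length (by omega)]
        exact List.take_of_length_le (by omega)
      rw [htake, if_pos heven, List.set_append, heq] at hset
      simp only [hlen, lt_irrefl, if_false, Nat.sub_self] at hset
      right
      apply Subtype.ext
      rw [hset, hc]
      rfl
  · rintro (⟨b', ⟨q, hq, hmid, hset⟩, rfl⟩ | hb)
    · simp only [List.get_eq_getElem] at hmid
      have hqn : q < n := by rwa [hlen] at hq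
      refine ⟨q, by simp only [hval, List.length_append, List.length_singleton, hlen]; omega, ?_, ?_⟩
      · simp only [List.get_eq_getElem, hval]
        rwa [List.getElem_append_left (by omega)]
      · have htake : (a.1 ++ [CSym.mid]).take q = a.1.take q :=
          List.take_append_of_le_length (by omega)
        show (appO b').1 = _
        rw [hval, htake, List.set_append]
        simp only [hlen, hqn, if_pos]
        show b'.1 ++ [CSym.mid] = _
        rw [hset]
    · rw [mem_singleton_iff] at hb
      subst hb
      refine ⟨n, by simp only [hval, List.length_append, List.length_singleton, hlen]; omega, ?_, ?_⟩
      · simp only [List.get_eq_getElem, hval]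
        rw [List.getElem_append_right (by omega)]
        simp [hlen]
      · have htake : (a.1 ++ [CSym.mid]).take n = a.1 := by
          rw [List.take_append_of_le_length (by omega)]
          exact List.take_of_length_le (by omega)
        rw [hval, htake, if_pos heven, List.set_append]
        simp only [hlen, lt_irrefl, if_false, Nat.sub_self]
        rw [hc]
        rfl

lemma posF_appM {n j : ℕ} (a : Str n (j+1)) : posF (appM a) = appM '' posF a := by
  rw [posF_eq, posF_eq]
  exact genF_app _ _ _ (by simp) a (appM a) rfl appM (fun _ => rfl)

lemma negF_appM {n j : ℕ} (a : Str n (j+1)) : negF (appM a) = appM '' negF a := by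
  rw [negF_eq, negF_eq]
  exact genF_app _ _ _ (by simp) a (appM a) rfl appM (fun _ => rfl)

lemma posF_appP {n j : ℕ} (a : Str n (j+1)) : posF (appP a) = appP '' posF a := by
  rw [posF_eq, posF_eq]
  exact genF_app _ _ _ (by simp) a (appP a) rfl appP (fun _ => rfl)

lemma negF_appP {n j : ℕ} (a : Str n (j+1)) : negF (appP a) = appP '' negF a := by
  rw [negF_eq, negF_eq]
  exact genF_app _ _ _ (by simp) a (appP a) rfl appP (fun _ => rfl)

lemma posF_appO {n j : ℕ} (hj : Odd j) (a : Str n (j+1)) :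
    posF (appO a) = appO '' posF a ∪ {appP a} := by
  rw [posF_eq, posF_eq]
  exact genF_appO _ _ (by simp) a (by rw [a.2.2]; exact hj.add_one) (appP a) rfl

lemma negF_appO {n j : ℕ} (hj : Odd j) (a : Str n (j+1)) :
    negF (appO a) = appO '' negF a ∪ {appM a} := by
  rw [negF_eq, negF_eq]
  exact genF_appO _ _ (by simp) a (by rw [a.2.2]; exact hj.add_one) (appM a) rfl

lemma sPos_union {n j : ℕ} (A B : Set (Str n (j+1))) : sPos (A ∪ B) = sPos A ∪ sPos B :=
  Set.biUnion_union A B _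

lemma sNeg_union {n j : ℕ} (A B : Set (Str n (j+1))) : sNeg (A ∪ B) = sNeg A ∪ sNeg B :=
  Set.biUnion_union A B _

lemma sPos_appM {n j : ℕ} (S : Set (Str n (j+1))) : sPos (appM '' S) = appM '' sPos S := by
  rw [sPos, Set.biUnion_image]
  simp only [posF_appM]
  rw [sPos, Set.image_iUnion₂]

lemma sNeg_appM {n j : ℕ} (S : Set (Str n (j+1))) : sNeg (appM '' S) = appM '' sNeg S := by
  rw [sNeg, Set.biUnion_image]
  simp only [negF_appM]
  rw [sNeg, Set.image_iUnion₂]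

lemma sPos_appP {n j : ℕ} (S : Set (Str n (j+1))) : sPos (appP '' S) = appP '' sPos S := by
  rw [sPos, Set.biUnion_image]
  simp only [posF_appP]
  rw [sPos, Set.image_iUnion₂]

lemma sNeg_appP {n j : ℕ} (S : Set (Str n (j+1))) : sNeg (appP '' S) = appP '' sNeg S := by
  rw [sNeg, Set.biUnion_image]
  simp only [negF_appP]
  rw [sNeg, Set.image_iUnion₂]

lemma sPos_appO {n j : ℕ} (hj : Odd j) (S : Set (Str n (j+1))) :
    sPos (appO '' S) = appO '' sPos S ∪ appP '' S := by
  rw [sPos, Set.biUnion_image]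
  simp only [posF_appO hj]
  ext z
  simp only [Set.mem_iUnion, Set.mem_union, Set.mem_singleton_iff, Set.mem_image,
    sPos, Set.mem_iUnion]
  constructor
  · rintro ⟨a, ha, (⟨b, hb, rfl⟩ | rfl)⟩
    · exact Or.inl ⟨b, ⟨a, ha, hb⟩, rfl⟩
    · exact Or.inr ⟨a, ha, rfl⟩
  · rintro (⟨b, ⟨a, ha, hb⟩, rfl⟩ | ⟨a, ha, rfl⟩)
    · exact ⟨a, ha, Or.inl ⟨b, hb, rfl⟩⟩
    · exact ⟨a, ha, Or.inr rfl⟩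

lemma sNeg_appO {n j : ℕ} (hj : Odd j) (S : Set (Str n (j+1))) :
    sNeg (appO '' S) = appO '' sNeg S ∪ appM '' S := by
  rw [sNeg, Set.biUnion_image]
  simp only [negF_appO hj]
  ext z
  simp only [Set.mem_iUnion, Set.mem_union, Set.mem_singleton_iff, Set.mem_image,
    sNeg, Set.mem_iUnion]
  constructor
  · rintro ⟨a, ha, (⟨b, hb, rfl⟩ | rfl)⟩
    · exact Or.inl ⟨b, ⟨a, ha, hb⟩, rfl⟩
    · exact Or.inr ⟨a, ha, rfl⟩
  · rintro (⟨b, ⟨a, ha, hb⟩, rfl⟩ | ⟨a, ha, rfl⟩)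
    · exact ⟨a, ha, Or.inl ⟨b, hb, rfl⟩⟩
    · exact ⟨a, ha, Or.inr rfl⟩

lemma appM_injective {n j : ℕ} : Function.Injective (appM (n := n) (j := j)) := by
  intro a b hab
  apply Subtype.ext
  have := congrArg Subtype.val hab
  exact (List.append_inj' this rfl).1

lemma appP_injective {n j : ℕ} : Function.Injective (appP (n := n) (j := j)) := by
  intro a b hab
  apply Subtype.ext
  have := congrArg Subtype.val hab
  exact (List.append_inj' this rfl).1

lemma appO_injective {n j : ℕ} : Function.Injective (appO (n := n) (j := j)) := by
  intro a b hab
  apply Subtype.ext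
  have := congrArg Subtype.val hab
  exact (List.append_inj' this rfl).1

lemma appM_ne_appO {n j : ℕ} (a : Str n (j+1)) (b : Str n j) : appM a ≠ appO b := by
  intro h
  have := (List.append_inj' (congrArg Subtype.val h) rfl).2
  simp at this

lemma appM_ne_appP {n j : ℕ} (a b : Str n j) : appM a ≠ appP b := by
  intro h
  have := (List.append_inj' (congrArg Subtype.val h) rfl).2
  simp at this

lemma appO_ne_appP {n j : ℕ} (a : Str n j) (b : Str n (j+1)) : appO a ≠ appP b := by
  intro h
  have := (List.append_inj' (congrArg Subtype.val h) rfl).2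
  simp at this

section Tri

variable {α β γ δ : Type*} {f : α → δ} {g : β → δ} {h : γ → δ}

def tri (f : α → δ) (g : β → δ) (h : γ → δ) (A : Set α) (B : Set β) (C : Set γ) : Set δ :=
  f '' A ∪ g '' B ∪ h '' C

lemma mem_tri_f (hf : Function.Injective f) (hfg : ∀ a b, f a ≠ g b)
    (hfh : ∀ a c, f a ≠ h c) {A B C} (a : α) : f a ∈ tri f g h A B C ↔ a ∈ A := by
  simp only [tri, Set.mem_union, Set.mem_image]
  constructor
  · rintro ((⟨a', ha, he⟩ | ⟨b, hb, he⟩) | ⟨c, hc, he⟩)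
    · rwa [← hf he]
    · exact absurd he.symm (hfg a b)
    · exact absurd he.symm (hfh a c)
  · intro ha; exact Or.inl (Or.inl ⟨a, ha, rfl⟩)

lemma mem_tri_g (hg : Function.Injective g) (hfg : ∀ a b, f a ≠ g b)
    (hgh : ∀ b c, g b ≠ h c) {A B C} (b : β) : g b ∈ tri f g h A B C ↔ b ∈ B := by
  simp only [tri, Set.mem_union, Set.mem_image]
  constructor
  · rintro ((⟨a, ha, he⟩ | ⟨b', hb, he⟩) | ⟨c, hc, he⟩)
    · exact absurd he (hfg a b)
    · rwa [← hg he]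
    · exact absurd he.symm (hgh b c)
  · intro hb; exact Or.inl (Or.inr ⟨b, hb, rfl⟩)

lemma mem_tri_h (hh : Function.Injective h) (hfh : ∀ a c, f a ≠ h c)
    (hgh : ∀ b c, g b ≠ h c) {A B C} (c : γ) : h c ∈ tri f g h A B C ↔ c ∈ C := by
  simp only [tri, Set.mem_union, Set.mem_image]
  constructor
  · rintro ((⟨a, ha, he⟩ | ⟨b, hb, he⟩) | ⟨c', hc, he⟩)
    · exact absurd he (hfh a c)
    · exact absurd he (hgh b c)
    · rwa [← hh he]
  · intro hc; exact Or.inr ⟨c, hc, rfl⟩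

lemma tri_union {A A' : Set α} {B B' : Set β} {C C' : Set γ} :
    tri f g h A B C ∪ tri f g h A' B' C' = tri f g h (A ∪ A') (B ∪ B') (C ∪ C') := by
  simp only [tri, Set.image_union]
  ext z
  simp only [Set.mem_union]
  tauto

lemma tri_diff (hf : Function.Injective f) (hg : Function.Injective g)
    (hh : Function.Injective h) (hfg : ∀ a b, f a ≠ g b) (hfh : ∀ a c, f a ≠ h c)
    (hgh : ∀ b c, g b ≠ h c) {A A' : Set α} {B B' : Set β} {C C' : Set γ} :
    tri f g h A B C \ tri f g h A' B' C' = tri f g h (A \ A') (B \ B') (C \ C') := by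
  ext z
  constructor
  · rintro ⟨hz, hz'⟩
    rcases hz with (⟨a, ha, rfl⟩ | ⟨b, hb, rfl⟩) | ⟨c, hc, rfl⟩
    · exact Or.inl (Or.inl ⟨a, ⟨ha, fun h' => hz' ((mem_tri_f hf hfg hfh a).2 h')⟩, rfl⟩)
    · exact Or.inl (Or.inr ⟨b, ⟨hb, fun h' => hz' ((mem_tri_g hg hfg hgh b).2 h')⟩, rfl⟩)
    · exact Or.inr ⟨c, ⟨hc, fun h' => hz' ((mem_tri_h hh hfh hgh c).2 h')⟩, rfl⟩
  · rintro ((⟨a, ⟨ha, ha'⟩, rfl⟩ | ⟨b, ⟨hb, hb'⟩, rfl⟩) | ⟨c, ⟨hc, hc'⟩, rfl⟩)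
    · exact ⟨Or.inl (Or.inl ⟨a, ha, rfl⟩), fun h' => ha' ((mem_tri_f hf hfg hfh a).1 h')⟩
    · exact ⟨Or.inl (Or.inr ⟨b, hb, rfl⟩), fun h' => hb' ((mem_tri_g hg hfg hgh b).1 h')⟩
    · exact ⟨Or.inr ⟨c, hc, rfl⟩, fun h' => hc' ((mem_tri_h hh hfh hgh c).1 h')⟩

lemma tri_eq_iff (hf : Function.Injective f) (hg : Function.Injective g)
    (hh : Function.Injective h) (hfg : ∀ a b, f a ≠ g b) (hfh : ∀ a c, f a ≠ h c)
    (hgh : ∀ b c, g b ≠ h c) {A A' : Set α} {B B' : Set β} {C C' : Set γ} :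
    tri f g h A B C = tri f g h A' B' C' ↔ A = A' ∧ B = B' ∧ C = C' := by
  constructor
  · intro he
    refine ⟨?_, ?_, ?_⟩
    · ext a
      rw [← mem_tri_f hf hfg hfh (A := A) (B := B) (C := C) a, he,
        mem_tri_f hf hfg hfh]
    · ext b
      rw [← mem_tri_g hg hfg hgh (A := A) (B := B) (C := C) b, he,
        mem_tri_g hg hfg hgh]
    · ext c
      rw [← mem_tri_h hh hfh hgh (A := A) (B := B) (C := C) c, he,
        mem_tri_h hh hfh hgh]
  · rintro ⟨rfl, rfl, rfl⟩; rfl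

end Tri

/-- `ξ` moves `μ` to `π`. -/
def MovesC {n j : ℕ} (ξ : Set (Str n (j+1))) (μ π : Set (Str n j)) : Prop :=
  π = (μ ∪ sPos ξ) \ sNeg ξ ∧ μ = (π ∪ sNeg ξ) \ sPos ξ

/-- Equivalence of the movement condition for `x̄⊖ ∪ x⊙ ∪ x̂⊕` with the six
conditions of equation (16) of Buckley–Garner (for `j` odd). -/
theorem cube_movement_equiv (n j : ℕ) (hj : Odd j)
    (x : Set (Str n (j+1))) (m p : Set (Str n j))
    (xb xh : Set (Str n (j+2))) (mb mh pb ph : Set (Str n (j+1))) :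
    MovesC (appM '' xb ∪ appO '' x ∪ appP '' xh)
           (appM '' mb ∪ appO '' m ∪ appP '' mh)
           (appM '' pb ∪ appO '' p ∪ appP '' ph) ↔
      (p = (m ∪ sPos x) \ sNeg x ∧
       m = (p ∪ sNeg x) \ sPos x ∧
       pb = (mb ∪ sPos xb) \ (sNeg xb ∪ x) ∧
       mb = (pb ∪ sNeg xb ∪ x) \ sPos xb ∧
       ph = (mh ∪ sPos xh ∪ x) \ sNeg xh ∧
       mh = (ph ∪ sNeg xh) \ (sPos xh ∪ x)) := by
  have hP : sPos (appM '' xb ∪ appO '' x ∪ appP '' xh)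
      = tri appM appO appP (sPos xb) (sPos x) (sPos xh ∪ x) := by
    rw [sPos_union, sPos_union, sPos_appM, sPos_appP, sPos_appO hj]
    show _ = _ ∪ _ ∪ _
    rw [Set.image_union]
    ext z; simp only [Set.mem_union]; tauto
  have hN : sNeg (appM '' xb ∪ appO '' x ∪ appP '' xh)
      = tri appM appO appP (sNeg xb ∪ x) (sNeg x) (sNeg xh) := by
    rw [sNeg_union, sNeg_union, sNeg_appM, sNeg_appP, sNeg_appO hj]
    show _ = _ ∪ _ ∪ _
    rw [Set.image_union]
    ext z; simp only [Set.mem_union]; tauto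
  suffices hs :
      (tri appM appO appP pb p ph =
          (tri appM appO appP mb m mh ∪
            tri appM appO appP (sPos xb) (sPos x) (sPos xh ∪ x)) \
            tri appM appO appP (sNeg xb ∪ x) (sNeg x) (sNeg xh) ∧
        tri appM appO appP mb m mh =
          (tri appM appO appP pb p ph ∪
            tri appM appO appP (sNeg xb ∪ x) (sNeg x) (sNeg xh)) \
            tri appM appO appP (sPos xb) (sPos x) (sPos xh ∪ x)) ↔
      (p = (m ∪ sPos x) \ sNeg x ∧
       m = (p ∪ sNeg x) \ sPos x ∧
       pb = (mb ∪ sPos xb) \ (sNeg xb ∪ x) ∧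
       mb = (pb ∪ sNeg xb ∪ x) \ sPos xb ∧
       ph = (mh ∪ sPos xh ∪ x) \ sNeg xh ∧
       mh = (ph ∪ sNeg xh) \ (sPos xh ∪ x)) by
    rw [MovesC, hP, hN]
    exact hs
  rw [tri_union, tri_union,
    tri_diff appM_injective appO_injective appP_injective appM_ne_appO appM_ne_appP
      appO_ne_appP,
    tri_diff appM_injective appO_injective appP_injective appM_ne_appO appM_ne_appP
      appO_ne_appP,
    tri_eq_iff appM_injective appO_injective appP_injective appM_ne_appO appM_ne_appP
      appO_ne_appP,
    tri_eq_iff appM_injective appO_injective appP_injective appM_ne_appO appM_ne_appP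
      appO_ne_appP]
  simp only [← Set.union_assoc]
  tauto
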